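/- Let E be a real inner product space, and let f : E → ℝ be convex and differentiable with L-Lipschitz gradient (L > 0). Let x* ∈ E be a global minimizer of f, fix a step size 0 < η ≤ 1/L, and define the gradient descent iterates by x_{t+1} = x_t − η·∇f(x_t) starting from any x₀ ∈ E. Then for every t ≥ 1, f(x_t) − f(x*) ≤ ‖x₀ − x*‖² / (2·η·t); in particular f(x_t) − f(x*) = O(1/t). -/

import Mathlib

open Real RealInnerProductSpace

lemma myLineDeriv {E : Type*} [NormedAddCommGroup E] [InnerProductSpace ℝ E]
    (f : E → ℝ) (f' : E → E)
    (hf : ∀ x, HasFDerivAt f (innerSL ℝ (f' x)) x) (u d : E) (s : ℝ) :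
    HasDerivAt (fun t : ℝ => f (u + t • d)) ⟪f' (u + s • d), d⟫ s := by
  have hline : HasDerivAt (fun t : ℝ => u + t • d) d s := by
    simpa using ((hasDerivAt_id s).smul_const d).const_add u
  have := (hf (u + s • d)).comp_hasDerivAt s hline
  simpa [Function.comp_def] using this

lemma grad_ineq {E : Type*} [NormedAddCommGroup E] [InnerProductSpace ℝ E]
    (f : E → ℝ) (f' : E → E)
    (hconv : ConvexOn ℝ Set.univ f)
    (hf : ∀ x, HasFDerivAt f (innerSL ℝ (f' x)) x) (u v : E) :
    f u + ⟪f' u, v - u⟫ ≤ f v := by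
  set d := v - u with hd
  set g : ℝ → ℝ := fun t => f (u + t • d) with hg
  have hder : HasDerivAt g ⟪f' u, d⟫ 0 := by
    simpa using myLineDeriv f f' hf u d 0
  have htend := hasDerivAt_iff_tendsto_slope.1 hder
  have htend' : Filter.Tendsto (slope g 0) (nhdsWithin 0 (Set.Ioi 0)) (nhds ⟪f' u, d⟫) :=
    htend.mono_left (nhdsWithin_mono _ (fun t ht => ne_of_gt ht))
  have hle : ⟪f' u, d⟫ ≤ f v - f u := by
    refine le_of_tendsto htend' ?_
    filter_upwards [Ioc_mem_nhdsGT_of_mem (α := ℝ) ⟨le_refl 0, zero_lt_one⟩] with t ht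
    have ht0 : 0 < t := ht.1
    have ht1 : t ≤ 1 := ht.2
    have hcvx := hconv.2 (Set.mem_univ u) (Set.mem_univ v)
      (by linarith : (0:ℝ) ≤ 1 - t) (le_of_lt ht0) (by ring)
    have heq : u + t • d = (1 - t) • u + t • v := by
      rw [hd]; module
    have : g t ≤ (1 - t) * f u + t * f v := by
      rw [hg]; simp only; rw [heq]; simpa using hcvx
    have hgt : g 0 = f u := by simp [hg]
    rw [slope_def_field, hgt, sub_zero, div_le_iff₀ ht0]
    nlinarith
  linarith

lemma descent_lemma {E : Type*} [NormedAddCommGroup E] [InnerProductSpace ℝ E]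
    (f : E → ℝ) (f' : E → E) (L : ℝ) (hL : 0 < L)
    (hf : ∀ x, HasFDerivAt f (innerSL ℝ (f' x)) x)
    (hlip : ∀ u v, ‖f' u - f' v‖ ≤ L * ‖u - v‖) (u v : E) :
    f v ≤ f u + ⟪f' u, v - u⟫ + L / 2 * ‖v - u‖ ^ 2 := by
  set d := v - u with hd
  set g : ℝ → ℝ := fun t => f (u + t • d) with hg
  set φ : ℝ → ℝ := fun t => ⟪f' (u + t • d), d⟫ with hφ
  have hder : ∀ s ∈ Set.uIcc (0:ℝ) 1, HasDerivAt g (φ s) s := fun s _ =>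
    myLineDeriv f f' hf u d s
  have hcontf' : Continuous f' := by
    have : LipschitzWith (Real.toNNReal L) f' := by
      apply LipschitzWith.of_dist_le_mul
      intro a b
      simpa [dist_eq_norm, Real.coe_toNNReal _ hL.le] using hlip a b
    exact this.continuous
  have hcontφ : Continuous φ := by
    apply Continuous.inner
    · exact hcontf'.comp (by continuity)
    · exact continuous_const
  have hint : IntervalIntegrable φ MeasureTheory.volume 0 1 :=
    hcontφ.intervalIntegrable 0 1
  have hFTC : ∫ t in (0:ℝ)..1, φ t = g 1 - g 0 :=
    intervalIntegral.integral_eq_sub_of_hasDerivAt hder hint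
  have hbound : ∀ t ∈ Set.Icc (0:ℝ) 1, φ t ≤ φ 0 + L * t * ‖d‖ ^ 2 := by
    intro t ht
    have : φ t - φ 0 = ⟪f' (u + t • d) - f' (u + (0:ℝ) • d), d⟫ := by
      rw [hφ]; simp [inner_sub_left]
    have h1 : φ t - φ 0 ≤ ‖f' (u + t • d) - f' (u + (0:ℝ) • d)‖ * ‖d‖ := by
      rw [this]; exact real_inner_le_norm _ _
    have h2 : ‖f' (u + t • d) - f' (u + (0:ℝ) • d)‖ ≤ L * (t * ‖d‖) := by
      have := hlip (u + t • d) (u + (0:ℝ) • d)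
      simpa [norm_smul, abs_of_nonneg ht.1] using this
    nlinarith [norm_nonneg d, ht.1, mul_le_mul_of_nonneg_right h2 (norm_nonneg d)]
  have hintineq : ∫ t in (0:ℝ)..1, φ t ≤ ∫ t in (0:ℝ)..1, (φ 0 + L * t * ‖d‖ ^ 2) := by
    apply intervalIntegral.integral_mono_on zero_le_one hint
    · exact (Continuous.intervalIntegrable (by continuity) 0 1)
    · exact hbound
  have hval : ∫ t in (0:ℝ)..1, (φ 0 + L * t * ‖d‖ ^ 2) = φ 0 + L / 2 * ‖d‖ ^ 2 := by
    rw [intervalIntegral.integral_add (intervalIntegrable_const)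
      (Continuous.intervalIntegrable (by continuity) 0 1)]
    simp only [intervalIntegral.integral_const]
    have : ∫ t in (0:ℝ)..1, L * t * ‖d‖ ^ 2 = L / 2 * ‖d‖ ^ 2 := by
      have : (fun t : ℝ => L * t * ‖d‖ ^ 2) = fun t : ℝ => (L * ‖d‖ ^ 2) * t := by
        funext t; ring
      rw [this, intervalIntegral.integral_const_mul, integral_id]
      ring
    rw [this]; simp
  have hg0 : g 0 = f u := by simp [hg]
  have hg1 : g 1 = f v := by simp [hg, hd]
  have hφ0 : φ 0 = ⟪f' u, d⟫ := by simp [hφ]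
  have := hFTC ▸ hintineq
  rw [hval, hg0, hg1, hφ0] at this
  linarith

theorem stmt19 {E : Type*} [NormedAddCommGroup E] [InnerProductSpace ℝ E]
    (f : E → ℝ) (f' : E → E) (L : ℝ) (hL : 0 < L)
    (hconv : ConvexOn ℝ Set.univ f)
    (hf : ∀ x, HasFDerivAt f (innerSL ℝ (f' x)) x)
    (hlip : ∀ u v, ‖f' u - f' v‖ ≤ L * ‖u - v‖)
    (xstar : E) (hmin : ∀ z, f xstar ≤ f z)
    (η : ℝ) (hη0 : 0 < η) (hηL : η ≤ 1 / L)
    (x : ℕ → E) (hiter : ∀ t, x (t + 1) = x t - η • f' (x t)) :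
    ∀ t : ℕ, 1 ≤ t → f (x t) - f xstar ≤ ‖x 0 - xstar‖ ^ 2 / (2 * η * t) := by
  have hLη : L * η ≤ 1 := by
    rw [mul_comm, ← le_div_iff₀ hL]; exact hηL
  -- descent step
  have hdesc : ∀ t, f (x (t + 1)) ≤ f (x t) - η / 2 * ‖f' (x t)‖ ^ 2 := by
    intro t
    have h := descent_lemma f f' L hL hf hlip (x t) (x (t + 1))
    have hv : x (t + 1) - x t = -(η • f' (x t)) := by rw [hiter t]; abel
    rw [hv] at h
    have hi : ⟪f' (x t), -(η • f' (x t))⟫ = -(η * ‖f' (x t)‖ ^ 2) := by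
      rw [inner_neg_right, real_inner_smul_right, real_inner_self_eq_norm_sq]
    have hn : ‖-(η • f' (x t))‖ ^ 2 = η ^ 2 * ‖f' (x t)‖ ^ 2 := by
      rw [norm_neg, norm_smul, mul_pow, Real.norm_eq_abs, sq_abs]
    rw [hi, hn] at h
    nlinarith [sq_nonneg ‖f' (x t)‖, mul_nonneg (mul_nonneg hη0.le hη0.le) (sq_nonneg ‖f' (x t)‖),
      mul_nonneg (mul_nonneg (sub_nonneg.2 hLη) hη0.le) (sq_nonneg ‖f' (x t)‖)]
  have hmono : ∀ t, f (x (t + 1)) ≤ f (x t) := by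
    intro t
    have := hdesc t
    nlinarith [sq_nonneg ‖f' (x t)‖, mul_nonneg hη0.le (sq_nonneg ‖f' (x t)‖)]
  have hanti : ∀ s t : ℕ, s ≤ t → f (x t) ≤ f (x s) :=
    fun s t hst => antitone_nat_of_succ_le (f := fun n => f (x n)) hmono hst
  -- key per-step inequality
  have key : ∀ t, f (x (t + 1)) - f xstar ≤
      (‖x t - xstar‖ ^ 2 - ‖x (t + 1) - xstar‖ ^ 2) / (2 * η) := by
    intro t
    have hgrad := grad_ineq f f' hconv hf (x t) xstar
    have hgi : f (x t) - f xstar ≤ ⟪f' (x t), x t - xstar⟫ := by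
      have : ⟪f' (x t), xstar - x t⟫ = -⟪f' (x t), x t - xstar⟫ := by
        rw [← inner_neg_right]; congr 1; abel
      rw [this] at hgrad; linarith
    have hexp : ‖x (t + 1) - xstar‖ ^ 2 =
        ‖x t - xstar‖ ^ 2 - 2 * η * ⟪f' (x t), x t - xstar⟫ + η ^ 2 * ‖f' (x t)‖ ^ 2 := by
      have h1 : x (t + 1) - xstar = (x t - xstar) - η • f' (x t) := by rw [hiter t]; abel
      rw [h1, @norm_sub_sq_real, real_inner_smul_right, norm_smul, Real.norm_eq_abs,
        mul_pow, sq_abs, real_inner_comm]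
      ring
    rw [le_div_iff₀ (by positivity : (0:ℝ) < 2 * η)]
    have := hdesc t
    nlinarith [sq_nonneg ‖f' (x t)‖]
  -- telescoping sum
  have hsum : ∀ T : ℕ, (∑ t ∈ Finset.range T, (f (x (t + 1)) - f xstar)) ≤
      ‖x 0 - xstar‖ ^ 2 / (2 * η) := by
    intro T
    calc (∑ t ∈ Finset.range T, (f (x (t + 1)) - f xstar))
        ≤ ∑ t ∈ Finset.range T, (‖x t - xstar‖ ^ 2 - ‖x (t + 1) - xstar‖ ^ 2) / (2 * η) :=
          Finset.sum_le_sum fun t _ => key t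
      _ = (∑ t ∈ Finset.range T, (‖x t - xstar‖ ^ 2 - ‖x (t + 1) - xstar‖ ^ 2)) / (2 * η) := by
          rw [Finset.sum_div]
      _ = (‖x 0 - xstar‖ ^ 2 - ‖x T - xstar‖ ^ 2) / (2 * η) := by
          rw [Finset.sum_range_sub' (fun t => ‖x t - xstar‖ ^ 2)]
      _ ≤ ‖x 0 - xstar‖ ^ 2 / (2 * η) := by
          apply div_le_div_of_nonneg_right ?_ (by positivity)
          · nlinarith [sq_nonneg ‖x T - xstar‖]
  intro T hT
  have hTpos : (0:ℝ) < T := by exact_mod_cast hT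
  have hlb : (T : ℝ) * (f (x T) - f xstar) ≤ ∑ t ∈ Finset.range T, (f (x (t + 1)) - f xstar) := by
    have : ∀ t ∈ Finset.range T, f (x T) - f xstar ≤ f (x (t + 1)) - f xstar := by
      intro t ht
      have := hanti (t + 1) T (Finset.mem_range.1 ht)
      linarith
    calc (T : ℝ) * (f (x T) - f xstar)
        = ∑ _t ∈ Finset.range T, (f (x T) - f xstar) := by
          rw [Finset.sum_const, Finset.card_range, nsmul_eq_mul]
      _ ≤ _ := Finset.sum_le_sum this
  have hA : (T : ℝ) * (f (x T) - f xstar) ≤ ‖x 0 - xstar‖ ^ 2 / (2 * η) :=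
    le_trans hlb (hsum T)
  have hA' := (le_div_iff₀ (by positivity : (0:ℝ) < 2 * η)).1 hA
  rw [le_div_iff₀ (by positivity : (0:ℝ) < 2 * η * T)]
  nlinarith
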